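/- Two standard Young tableaux of partition shapes are connected by a sequence of elementary dual equivalences d_i if and only if they have the same shape. Equivalently, the involutions d_i act transitively on SYT(λ) for each partition λ, and preserve the shape. -/

import Mathlib

open scoped Classical

noncomputable section

/-- `T` is a standard Young tableau of shape `μ` with entries `1, …, n`.
Here `μ` is a Young diagram (Mathlib convention: row `0` is the longest row,
so the reading word below reads rows from the largest row index down to row `0`,
which corresponds to French notation read from the top row down), and `T` assigns
`0` to cells outside `μ`. -/
def IsSYT (n : ℕ) (μ : YoungDiagram) (T : ℕ × ℕ → ℕ) : Prop :=
  (∀ c, c ∉ μ → T c = 0) ∧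
  Set.BijOn T (↑μ.cells) (Set.Icc 1 n) ∧
  (∀ i j : ℕ, (i, j + 1) ∈ μ → T (i, j) < T (i, j + 1)) ∧
  (∀ i j : ℕ, (i + 1, j) ∈ μ → T (i, j) < T (i + 1, j))

/-- The value `u` occurs before the value `v` in the row reading word of `T`
(rows read from the top row down, each row left to right). -/
def Precedes (μ : YoungDiagram) (T : ℕ × ℕ → ℕ) (u v : ℕ) : Prop :=
  ∃ cu ∈ μ.cells, ∃ cv ∈ μ.cells,
    T cu = u ∧ T cv = v ∧ (cv.1 < cu.1 ∨ (cu.1 = cv.1 ∧ cu.2 < cv.2))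

/-- Interchange the values `a` and `b` in the filling `T`. -/
def swapVals (a b : ℕ) (T : ℕ × ℕ → ℕ) : ℕ × ℕ → ℕ :=
  fun c => if T c = a then b else if T c = b then a else T c

/-- The elementary dual equivalence `d_i` acting on fillings via the row reading
word: identity if `i` occurs between `i-1` and `i+1`; if `i-1` is in the middle it
swaps the values `i` and `i+1`; if `i+1` is in the middle it swaps `i-1` and `i`. -/
def dT (μ : YoungDiagram) (i : ℕ) (T : ℕ × ℕ → ℕ) : ℕ × ℕ → ℕ :=
  if (Precedes μ T i (i-1) ∧ Precedes μ T (i-1) (i+1)) ∨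
     (Precedes μ T (i+1) (i-1) ∧ Precedes μ T (i-1) i) then swapVals i (i+1) T
  else if (Precedes μ T i (i+1) ∧ Precedes μ T (i+1) (i-1)) ∨
     (Precedes μ T (i-1) (i+1) ∧ Precedes μ T (i+1) i) then swapVals (i-1) i T
  else T

/-- One elementary dual equivalence step between standard Young tableaux (of a
common partition shape, with `n` boxes). -/
def dtRel (n : ℕ) (S S' : ℕ × ℕ → ℕ) : Prop :=
  ∃ μ : YoungDiagram, IsSYT n μ S ∧ IsSYT n μ S' ∧
    ∃ i, 2 ≤ i ∧ i ≤ n - 1 ∧ dT μ i S = S'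

namespace DualEquivAux

lemma mem_coe_cells (ν : YoungDiagram) (d : ℕ × ℕ) :
    d ∈ (↑ν.cells : Set (ℕ × ℕ)) ↔ d ∈ ν := by
  simp

def IsCorner (μ : YoungDiagram) (c : ℕ × ℕ) : Prop :=
  c ∈ μ ∧ (c.1 + 1, c.2) ∉ μ ∧ (c.1, c.2 + 1) ∉ μ

lemma eraseCorner_lowerSet {μ : YoungDiagram} {c : ℕ × ℕ} (h : IsCorner μ c) :
    IsLowerSet ((μ.cells.erase c : Finset (ℕ × ℕ)) : Set (ℕ × ℕ)) := by
  intro a b hba ha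
  simp only [Finset.coe_erase, Set.mem_diff, Finset.mem_coe,
    Set.mem_singleton_iff, YoungDiagram.mem_cells] at ha ⊢
  obtain ⟨haμ, hac⟩ := ha
  refine ⟨μ.isLowerSet hba haμ, ?_⟩
  rintro rfl
  obtain ⟨h1, h2⟩ := Prod.le_def.mp hba
  have hne : b.1 < a.1 ∨ b.2 < a.2 := by
    rcases Nat.lt_or_ge b.1 a.1 with h | h
    · exact Or.inl h
    · refine Or.inr ?_
      rcases Nat.lt_or_ge b.2 a.2 with h' | h'
      · exact h'
      · exact absurd (Prod.ext (le_antisymm h1 h) (le_antisymm h2 h')).symm hac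
  rcases hne with hlt | hlt
  · exact h.2.1 (μ.up_left_mem hlt h2 (by simpa using haμ))
  · exact h.2.2 (μ.up_left_mem h1 hlt (by simpa using haμ))

def eraseCorner (μ : YoungDiagram) (c : ℕ × ℕ) : YoungDiagram :=
  if h : IsCorner μ c then ⟨μ.cells.erase c, eraseCorner_lowerSet h⟩ else μ

lemma mem_eraseCorner {μ : YoungDiagram} {c : ℕ × ℕ} (h : IsCorner μ c) (d : ℕ × ℕ) :
    d ∈ eraseCorner μ c ↔ d ∈ μ ∧ d ≠ c := by
  simp [eraseCorner, h, Finset.mem_erase, and_comm]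

lemma card_eraseCorner {μ : YoungDiagram} {c : ℕ × ℕ} (h : IsCorner μ c) :
    (eraseCorner μ c).card = μ.card - 1 := by
  simp only [eraseCorner, dif_pos h, YoungDiagram.card]
  exact Finset.card_erase_of_mem (by simpa using h.1)

lemma val_bounds {n : ℕ} {μ : YoungDiagram} {T : ℕ × ℕ → ℕ} (hT : IsSYT n μ T)
    {d : ℕ × ℕ} (hd : d ∈ μ) : 1 ≤ T d ∧ T d ≤ n := by
  have := hT.2.1.1 (by simpa using hd : d ∈ (↑μ.cells : Set (ℕ × ℕ)))
  exact ⟨this.1, this.2⟩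

lemma val_le {n : ℕ} {μ : YoungDiagram} {T : ℕ × ℕ → ℕ} (hT : IsSYT n μ T)
    (d : ℕ × ℕ) : T d ≤ n := by
  by_cases hd : d ∈ μ
  · exact (val_bounds hT hd).2
  · simp [hT.1 d hd]

lemma mem_iff_val_ne {n : ℕ} {μ : YoungDiagram} {T : ℕ × ℕ → ℕ} (hT : IsSYT n μ T)
    (d : ℕ × ℕ) : d ∈ μ ↔ T d ≠ 0 := by
  constructor
  · intro hd
    have := (val_bounds hT hd).1
    omega
  · intro h
    by_contra hd
    exact h (hT.1 d hd)

lemma shape_unique {n : ℕ} {μ ν : YoungDiagram} {T : ℕ × ℕ → ℕ}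
    (h1 : IsSYT n μ T) (h2 : IsSYT n ν T) : μ = ν := by
  apply YoungDiagram.ext
  ext d
  simp only [YoungDiagram.mem_cells]
  rw [mem_iff_val_ne h1, mem_iff_val_ne h2]

lemma inj_val {n : ℕ} {μ : YoungDiagram} {T : ℕ × ℕ → ℕ} (hT : IsSYT n μ T)
    {d d' : ℕ × ℕ} (hd : d ∈ μ) (hd' : d' ∈ μ) (h : T d = T d') : d = d' :=
  hT.2.1.2.1 (by simpa using hd) (by simpa using hd') h

lemma exists_val {n : ℕ} {μ : YoungDiagram} {T : ℕ × ℕ → ℕ} (hT : IsSYT n μ T)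
    {v : ℕ} (h1 : 1 ≤ v) (h2 : v ≤ n) : ∃ d ∈ μ, T d = v := by
  obtain ⟨d, hd, hdv⟩ := hT.2.1.2.2 (show v ∈ Set.Icc 1 n by simp [h1, h2])
  exact ⟨d, by simpa using hd, hdv⟩

lemma corner_of_max {n : ℕ} {μ : YoungDiagram} {T : ℕ × ℕ → ℕ} (hT : IsSYT n μ T)
    {c : ℕ × ℕ} (hc : c ∈ μ) (hv : T c = n) : IsCorner μ c := by
  obtain ⟨x, y⟩ := c
  refine ⟨hc, ?_, ?_⟩
  · intro hmem
    dsimp only at hmem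
    have h1 := hT.2.2.2 x y hmem
    have h2 := (val_bounds hT hmem).2
    omega
  · intro hmem
    dsimp only at hmem
    have h1 := hT.2.2.1 x y hmem
    have h2 := (val_bounds hT hmem).2
    omega


def extT (v : ℕ) (c : ℕ × ℕ) (U : ℕ × ℕ → ℕ) : ℕ × ℕ → ℕ :=
  fun d => if d = c then v else U d

def resT (c : ℕ × ℕ) (T : ℕ × ℕ → ℕ) : ℕ × ℕ → ℕ :=
  fun d => if d = c then 0 else T d

lemma isSYT_extT {n : ℕ} {μ : YoungDiagram} {c : ℕ × ℕ} {U : ℕ × ℕ → ℕ}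
    (hcor : IsCorner μ c) (hn : 1 ≤ n)
    (hU : IsSYT (n - 1) (eraseCorner μ c) U) : IsSYT n μ (extT n c U) := by
  have hmem := mem_eraseCorner hcor
  refine ⟨?_, ⟨?_, ?_, ?_⟩, ?_, ?_⟩
  · intro d hd
    have hdc : d ≠ c := fun h => hd (h ▸ hcor.1)
    have : d ∉ eraseCorner μ c := fun h => hd ((hmem d).mp h).1
    simp [extT, hdc, hU.1 d this]
  · -- MapsTo
    intro d hd
    rw [mem_coe_cells] at hd
    by_cases hdc : d = c
    · simp [extT, hdc, hn]
    · have hdν : d ∈ eraseCorner μ c := (hmem d).mpr ⟨hd, hdc⟩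
      have := val_bounds hU hdν
      simp only [extT, if_neg hdc]
      constructor <;> omega
  · -- InjOn
    intro d hd d' hd' heq
    rw [mem_coe_cells] at hd hd'
    by_cases hdc : d = c <;> by_cases hdc' : d' = c
    · rw [hdc, hdc']
    · exfalso
      have hd'ν : d' ∈ eraseCorner μ c := (hmem d').mpr ⟨hd', hdc'⟩
      have := val_bounds hU hd'ν
      simp only [extT, if_pos hdc, if_neg hdc'] at heq
      omega
    · exfalso
      have hdν : d ∈ eraseCorner μ c := (hmem d).mpr ⟨hd, hdc⟩
      have := val_bounds hU hdν
      simp only [extT, if_neg hdc, if_pos hdc'] at heq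
      omega
    · simp only [extT, if_neg hdc, if_neg hdc'] at heq
      exact inj_val hU ((hmem d).mpr ⟨hd, hdc⟩) ((hmem d').mpr ⟨hd', hdc'⟩) heq
  · -- SurjOn
    intro v hv
    simp only [Set.mem_Icc] at hv
    by_cases hvn : v = n
    · exact ⟨c, by simpa using hcor.1, by simp [extT, hvn]⟩
    · obtain ⟨d, hd, hdv⟩ := exists_val hU hv.1 (by omega)
      have hdc : d ≠ c := ((hmem d).mp hd).2
      exact ⟨d, by simpa using ((hmem d).mp hd).1, by simpa [extT, hdc] using hdv⟩
  · -- rows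
    intro i j hij
    have hij' : (i, j) ∈ μ := μ.up_left_mem le_rfl (Nat.le_succ j) hij
    by_cases h1 : (i, j) = c
    · subst h1
      exact absurd hij hcor.2.2
    by_cases h2 : (i, j + 1) = c
    · have : (i, j) ∈ eraseCorner μ c := (hmem _).mpr ⟨hij', h1⟩
      have := val_bounds hU this
      simp only [extT, if_neg h1, if_pos h2]
      omega
    · have hb : (i, j + 1) ∈ eraseCorner μ c := (hmem _).mpr ⟨hij, h2⟩
      have := hU.2.2.1 i j hb
      simpa [extT, if_neg h1, if_neg h2] using this
  · -- cols
    intro i j hij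
    have hij' : (i, j) ∈ μ := μ.up_left_mem (Nat.le_succ i) le_rfl hij
    by_cases h1 : (i, j) = c
    · subst h1
      exact absurd hij hcor.2.1
    by_cases h2 : (i + 1, j) = c
    · have : (i, j) ∈ eraseCorner μ c := (hmem _).mpr ⟨hij', h1⟩
      have := val_bounds hU this
      simp only [extT, if_neg h1, if_pos h2]
      omega
    · have hb : (i + 1, j) ∈ eraseCorner μ c := (hmem _).mpr ⟨hij, h2⟩
      have := hU.2.2.2 i j hb
      simpa [extT, if_neg h1, if_neg h2] using this

lemma isSYT_resT {n : ℕ} {μ : YoungDiagram} {c : ℕ × ℕ} {T : ℕ × ℕ → ℕ}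
    (hT : IsSYT n μ T) (hc : c ∈ μ) (hval : T c = n) (hn : 1 ≤ n) :
    IsSYT (n - 1) (eraseCorner μ c) (resT c T) := by
  have hcor : IsCorner μ c := corner_of_max hT hc hval
  have hmem := mem_eraseCorner hcor
  refine ⟨?_, ⟨?_, ?_, ?_⟩, ?_, ?_⟩
  · intro d hd
    by_cases hdc : d = c
    · simp [resT, hdc]
    · have : d ∉ μ := fun h => hd ((hmem d).mpr ⟨h, hdc⟩)
      simp [resT, hdc, hT.1 d this]
  · intro d hd
    rw [mem_coe_cells] at hd
    obtain ⟨hdμ, hdc⟩ := (hmem d).mp hd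
    have hb := val_bounds hT hdμ
    have hne : T d ≠ n := fun h => hdc (inj_val hT hdμ hc (h.trans hval.symm))
    simp only [resT, if_neg hdc]
    constructor <;> omega
  · intro d hd d' hd' heq
    rw [mem_coe_cells] at hd hd'
    obtain ⟨hdμ, hdc⟩ := (hmem d).mp hd
    obtain ⟨hd'μ, hd'c⟩ := (hmem d').mp hd'
    simp only [resT, if_neg hdc, if_neg hd'c] at heq
    exact inj_val hT hdμ hd'μ heq
  · intro v hv
    simp only [Set.mem_Icc] at hv
    obtain ⟨d, hdμ, hdv⟩ := exists_val hT hv.1 (by omega)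
    have hdc : d ≠ c := by
      intro h
      rw [h, hval] at hdv
      omega
    exact ⟨d, by simpa using (hmem d).mpr ⟨hdμ, hdc⟩, by simpa [resT, hdc] using hdv⟩
  · intro i j hij
    obtain ⟨hbμ, hbc⟩ := (hmem _).mp hij
    have haμ : (i, j) ∈ μ := μ.up_left_mem le_rfl (Nat.le_succ j) hbμ
    have hac : (i, j) ≠ c := by
      intro h
      subst h
      exact hcor.2.2 hbμ
    have := hT.2.2.1 i j hbμ
    simpa [resT, hac, hbc] using this
  · intro i j hij
    obtain ⟨hbμ, hbc⟩ := (hmem _).mp hij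
    have haμ : (i, j) ∈ μ := μ.up_left_mem (Nat.le_succ i) le_rfl hbμ
    have hac : (i, j) ≠ c := by
      intro h
      subst h
      exact hcor.2.1 hbμ
    have := hT.2.2.2 i j hbμ
    simpa [resT, hac, hbc] using this

lemma extT_resT {n : ℕ} {c : ℕ × ℕ} {T : ℕ × ℕ → ℕ} (hval : T c = n) :
    extT n c (resT c T) = T := by
  funext d
  by_cases hd : d = c <;> simp [extT, resT, hd, hval.symm]

lemma precedes_extT {n : ℕ} {μ : YoungDiagram} {c : ℕ × ℕ} {U : ℕ × ℕ → ℕ}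
    (hcor : IsCorner μ c) {u v : ℕ} (hu : u < n) (hv : v < n) :
    Precedes μ (extT n c U) u v ↔ Precedes (eraseCorner μ c) U u v := by
  have hmem := mem_eraseCorner hcor
  constructor
  · rintro ⟨cu, hcu, cv, hcv, e1, e2, hord⟩
    rw [YoungDiagram.mem_cells] at hcu hcv
    have hex : extT n c U c = n := by simp [extT]
    have hcuc : cu ≠ c := by
      intro h; rw [h] at e1; omega
    have hcvc : cv ≠ c := by
      intro h; rw [h] at e2; omega
    refine ⟨cu, ?_, cv, ?_, ?_, ?_, hord⟩
    · simpa using (hmem cu).mpr ⟨hcu, hcuc⟩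
    · simpa using (hmem cv).mpr ⟨hcv, hcvc⟩
    · simpa [extT, hcuc] using e1
    · simpa [extT, hcvc] using e2
  · rintro ⟨cu, hcu, cv, hcv, e1, e2, hord⟩
    rw [YoungDiagram.mem_cells] at hcu hcv
    obtain ⟨hcuμ, hcuc⟩ := (hmem cu).mp hcu
    obtain ⟨hcvμ, hcvc⟩ := (hmem cv).mp hcv
    exact ⟨cu, by simpa using hcuμ, cv, by simpa using hcvμ,
      by simpa [extT, hcuc] using e1, by simpa [extT, hcvc] using e2, hord⟩

lemma swapVals_extT {a b n : ℕ} {c : ℕ × ℕ} {U : ℕ × ℕ → ℕ} (ha : a ≠ n) (hb : b ≠ n) :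
    swapVals a b (extT n c U) = extT n c (swapVals a b U) := by
  funext d
  by_cases hd : d = c
  · simp [swapVals, extT, hd, Ne.symm ha, Ne.symm hb]
  · simp [swapVals, extT, hd]

lemma dT_extT {n i : ℕ} {μ : YoungDiagram} {c : ℕ × ℕ} {U U' : ℕ × ℕ → ℕ}
    (hcor : IsCorner μ c) (hi2 : 2 ≤ i) (hi : i + 1 < n)
    (hd : dT (eraseCorner μ c) i U = U') :
    dT μ i (extT n c U) = extT n c U' := by
  have e1 : Precedes μ (extT n c U) i (i-1) ↔ Precedes (eraseCorner μ c) U i (i-1) :=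
    precedes_extT hcor (by omega) (by omega)
  have e2 : Precedes μ (extT n c U) (i-1) (i+1) ↔ Precedes (eraseCorner μ c) U (i-1) (i+1) :=
    precedes_extT hcor (by omega) (by omega)
  have e3 : Precedes μ (extT n c U) (i+1) (i-1) ↔ Precedes (eraseCorner μ c) U (i+1) (i-1) :=
    precedes_extT hcor (by omega) (by omega)
  have e4 : Precedes μ (extT n c U) (i-1) i ↔ Precedes (eraseCorner μ c) U (i-1) i :=
    precedes_extT hcor (by omega) (by omega)
  have e5 : Precedes μ (extT n c U) i (i+1) ↔ Precedes (eraseCorner μ c) U i (i+1) :=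
    precedes_extT hcor (by omega) (by omega)
  have e6 : Precedes μ (extT n c U) (i+1) i ↔ Precedes (eraseCorner μ c) U (i+1) i :=
    precedes_extT hcor (by omega) (by omega)
  simp only [dT] at hd ⊢
  simp only [e1, e2, e3, e4, e5, e6]
  split_ifs at hd ⊢ with h1 h2
  · rw [← hd, swapVals_extT (by omega) (by omega)]
  · rw [← hd, swapVals_extT (by omega) (by omega)]
  · rw [hd]

lemma lift_chain {n : ℕ} {μ : YoungDiagram} {c : ℕ × ℕ} (hcor : IsCorner μ c) (hn : 1 ≤ n)
    {U W : ℕ × ℕ → ℕ} (hchain : Relation.ReflTransGen (dtRel (n - 1)) U W)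
    (hU : IsSYT (n - 1) (eraseCorner μ c) U) :
    IsSYT (n - 1) (eraseCorner μ c) W ∧
      Relation.ReflTransGen (dtRel n) (extT n c U) (extT n c W) := by
  induction hchain with
  | refl => exact ⟨hU, Relation.ReflTransGen.refl⟩
  | tail hUV step ih =>
    obtain ⟨hV, hch⟩ := ih
    obtain ⟨ν', hV', hW', i, hi2, hi1, hdT⟩ := step
    have hνν : ν' = eraseCorner μ c := shape_unique hV' hV
    subst hνν
    refine ⟨hW', hch.tail ?_⟩
    exact ⟨μ, isSYT_extT hcor hn hV, isSYT_extT hcor hn hW', i, hi2, by omega,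
      dT_extT hcor hi2 (by omega) hdT⟩

lemma exists_isSYT : ∀ (N : ℕ) (μ : YoungDiagram), μ.card = N → ∃ T, IsSYT N μ T := by
  intro N
  induction N using Nat.strong_induction_on with
  | _ N ih =>
    intro μ hμ
    rcases Nat.eq_zero_or_pos N with h0 | hpos
    · subst h0
      have hcells : μ.cells = ∅ := Finset.card_eq_zero.mp hμ
      refine ⟨fun _ => 0, fun c _ => rfl, ?_, ?_, ?_⟩
      · rw [hcells]
        simp only [Finset.coe_empty]
        rw [Set.Icc_eq_empty (by omega)]
        exact Set.bijOn_empty _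
      · intro i j hij
        rw [← YoungDiagram.mem_cells, hcells] at hij
        simp at hij
      · intro i j hij
        rw [← YoungDiagram.mem_cells, hcells] at hij
        simp at hij
    · have hpos' : 0 < μ.card := hμ ▸ hpos
      have hne : μ.cells.Nonempty := Finset.card_pos.mp hpos'
      obtain ⟨cc, hcc, hmax⟩ : ∃ cc ∈ μ.cells, ∀ x ∈ μ.cells, ¬ cc < x := by
        obtain ⟨m, hm⟩ := Finset.exists_maximal hne
        exact ⟨m, hm.1, fun x hx hlt => absurd (hm.2 hx hlt.le) (not_le_of_gt hlt)⟩
      rw [YoungDiagram.mem_cells] at hcc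
      have hcor : IsCorner μ cc := by
        refine ⟨hcc, ?_, ?_⟩
        · intro hmem
          exact hmax _ (by simpa using hmem)
            (Prod.mk_lt_mk.mpr (Or.inl ⟨Nat.lt_succ_self _, le_rfl⟩))
        · intro hmem
          exact hmax _ (by simpa using hmem)
            (Prod.mk_lt_mk.mpr (Or.inr ⟨le_rfl, Nat.lt_succ_self _⟩))
      have hcard' : (eraseCorner μ cc).card = N - 1 := by rw [card_eraseCorner hcor, hμ]
      obtain ⟨U, hU⟩ := ih (N - 1) (by omega) _ hcard'
      exact ⟨extT N cc U, isSYT_extT hcor hpos hU⟩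

lemma corner_row_ne {μ : YoungDiagram} {c c' : ℕ × ℕ} (h : IsCorner μ c) (h' : IsCorner μ c')
    (hne : c ≠ c') : c.1 ≠ c'.1 := by
  intro heq
  rcases Nat.lt_trichotomy c.2 c'.2 with hlt | heq2 | hlt
  · exact h.2.2 (μ.up_left_mem heq.le hlt h'.1)
  · exact hne (Prod.ext heq heq2)
  · exact h'.2.2 (μ.up_left_mem heq.ge hlt h.1)

lemma corner_col_lt {μ : YoungDiagram} {c c' : ℕ × ℕ} (h : IsCorner μ c) (h' : IsCorner μ c')
    (hr : c.1 < c'.1) : c'.2 < c.2 := by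
  by_contra hle
  push_neg at hle
  exact h.2.1 (μ.up_left_mem hr hle h'.1)

lemma three_le_card {μ : YoungDiagram} {c c' : ℕ × ℕ} (h : IsCorner μ c) (h' : IsCorner μ c')
    (hr : c.1 < c'.1) : 3 ≤ μ.card := by
  have h00 : ((0, 0) : ℕ × ℕ) ∈ μ := μ.up_left_mem (Nat.zero_le _) (Nat.zero_le _) h'.1
  have hc0 : c ≠ (0, 0) := by
    intro hc
    subst hc
    exact h.2.1 (μ.up_left_mem (by dsimp only at hr ⊢; omega) (Nat.zero_le _) h'.1)
  have hc'0 : c' ≠ (0, 0) := by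
    intro hc'; rw [hc'] at hr; exact absurd hr (by omega)
  have hcc' : c ≠ c' := by intro hh; rw [hh] at hr; omega
  have hsub : ({(0,0), c, c'} : Finset (ℕ × ℕ)) ⊆ μ.cells := by
    intro d hd
    simp only [Finset.mem_insert, Finset.mem_singleton] at hd
    rcases hd with rfl | rfl | rfl
    · simpa using h00
    · simpa using h.1
    · simpa using h'.1
  have hcard3 : ({(0,0), c, c'} : Finset (ℕ × ℕ)).card = 3 := by
    rw [Finset.card_insert_of_notMem (by
          simp only [Finset.mem_insert, Finset.mem_singleton]
          push_neg
          exact ⟨fun hh => hc0 hh.symm, fun hh => hc'0 hh.symm⟩),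
        Finset.card_insert_of_notMem (by simp [hcc']), Finset.card_singleton]
  calc 3 = ({(0,0), c, c'} : Finset (ℕ × ℕ)).card := hcard3.symm
    _ ≤ μ.cells.card := Finset.card_le_card hsub

lemma exists_middle {μ : YoungDiagram} {c c' : ℕ × ℕ} (h : IsCorner μ c) (h' : IsCorner μ c')
    (hr : c.1 < c'.1) :
    ∃ e : ℕ × ℕ, e ∈ μ ∧ e ≠ c ∧ e ≠ c' ∧
      ((e.1 + 1, e.2) ∉ μ ∨ (e.1 + 1, e.2) = c') ∧
      ((e.1, e.2 + 1) ∉ μ ∨ (e.1, e.2 + 1) = c) ∧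
      e.1 < c'.1 ∧ (c.1 < e.1 ∨ (e.1 = c.1 ∧ e.2 < c.2)) := by
  have hba : c'.2 < c.2 := corner_col_lt h h' hr
  by_cases hs : c'.1 = c.1 + 1
  · refine ⟨(c.1, c.2 - 1), μ.up_left_mem le_rfl (by omega) h.1, ?_, ?_, ?_, ?_, ?_, ?_⟩
    · intro he; apply_fun Prod.snd at he; dsimp only at he; omega
    · intro he; apply_fun Prod.fst at he; dsimp only at he; omega
    · by_cases h2 : c.2 - 1 = c'.2
      · exact Or.inr (Prod.ext (by dsimp only; omega) (by dsimp only; omega))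
      · refine Or.inl fun hmem => ?_
        exact h'.2.2 (μ.up_left_mem (by dsimp only; omega) (by dsimp only; omega) hmem)
    · exact Or.inr (Prod.ext rfl (by dsimp only; omega))
    · dsimp only; omega
    · exact Or.inr ⟨rfl, by dsimp only; omega⟩
  · have hs' : c.1 + 1 < c'.1 := by omega
    have hLpos : 0 < μ.rowLen (c'.1 - 1) := by
      have : (c'.1 - 1, 0) ∈ μ := μ.up_left_mem (by omega) (Nat.zero_le _) h'.1
      rw [YoungDiagram.mem_iff_lt_rowLen] at this; omega
    have hLb : c'.2 < μ.rowLen (c'.1 - 1) := by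
      have : (c'.1 - 1, c'.2) ∈ μ := μ.up_left_mem (by omega) le_rfl h'.1
      rwa [YoungDiagram.mem_iff_lt_rowLen] at this
    refine ⟨(c'.1 - 1, μ.rowLen (c'.1 - 1) - 1), ?_, ?_, ?_, ?_, ?_, ?_, ?_⟩
    · rw [YoungDiagram.mem_iff_lt_rowLen]; omega
    · intro he; apply_fun Prod.fst at he; dsimp only at he; omega
    · intro he; apply_fun Prod.fst at he; dsimp only at he; omega
    · by_cases h2 : μ.rowLen (c'.1 - 1) - 1 = c'.2
      · exact Or.inr (Prod.ext (by dsimp only; omega) (by dsimp only; omega))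
      · refine Or.inl fun hmem => ?_
        exact h'.2.2 (μ.up_left_mem (by dsimp only; omega) (by dsimp only; omega) hmem)
    · refine Or.inl ?_
      dsimp only
      rw [show μ.rowLen (c'.1 - 1) - 1 + 1 = μ.rowLen (c'.1 - 1) by omega,
        YoungDiagram.mem_iff_lt_rowLen]
      omega
    · dsimp only; omega
    · exact Or.inl (by dsimp only; omega)

lemma isCorner_eraseCorner_of {μ : YoungDiagram} {c d : ℕ × ℕ} (hc : IsCorner μ c)
    (hd : IsCorner μ d) (hne : d ≠ c) : IsCorner (eraseCorner μ c) d := by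
  refine ⟨(mem_eraseCorner hc d).mpr ⟨hd.1, hne⟩, ?_, ?_⟩
  · intro hmem; exact hd.2.1 ((mem_eraseCorner hc _).mp hmem).1
  · intro hmem; exact hd.2.2 ((mem_eraseCorner hc _).mp hmem).1

lemma eraseCorner_comm {μ : YoungDiagram} {c c' : ℕ × ℕ} (h : IsCorner μ c) (h' : IsCorner μ c')
    (hne : c ≠ c') :
    eraseCorner (eraseCorner μ c) c' = eraseCorner (eraseCorner μ c') c := by
  have h1 : IsCorner (eraseCorner μ c) c' := isCorner_eraseCorner_of h h' (Ne.symm hne)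
  have h2 : IsCorner (eraseCorner μ c') c := isCorner_eraseCorner_of h' h hne
  apply YoungDiagram.ext
  ext d
  simp only [YoungDiagram.mem_cells]
  rw [mem_eraseCorner h1, mem_eraseCorner h, mem_eraseCorner h2, mem_eraseCorner h']
  tauto

lemma move_corner {n : ℕ} {μ : YoungDiagram} {c c' : ℕ × ℕ} (hcard : μ.card = n)
    (h : IsCorner μ c) (h' : IsCorner μ c') (hr : c.1 < c'.1) :
    ∃ U₁ U₂ : ℕ × ℕ → ℕ, IsSYT n μ U₁ ∧ IsSYT n μ U₂ ∧ U₁ c = n ∧ U₂ c' = n ∧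
      dtRel n U₁ U₂ ∧ dtRel n U₂ U₁ := by
  have hn3 : 3 ≤ n := hcard ▸ three_le_card h h' hr
  have hnec : c ≠ c' := fun hh => by rw [hh] at hr; omega
  obtain ⟨e, heμ, hec, hec', hup, hright, helt, hreg⟩ := exists_middle h h' hr
  have hc'1 : IsCorner (eraseCorner μ c) c' := isCorner_eraseCorner_of h h' (Ne.symm hnec)
  have hc1 : IsCorner (eraseCorner μ c') c := isCorner_eraseCorner_of h' h hnec
  have hmem2 : ∀ d, d ∈ eraseCorner (eraseCorner μ c) c' ↔ d ∈ μ ∧ d ≠ c ∧ d ≠ c' := by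
    intro d
    rw [mem_eraseCorner hc'1, mem_eraseCorner h]
    tauto
  have hecor : IsCorner (eraseCorner (eraseCorner μ c) c') e := by
    refine ⟨(hmem2 e).mpr ⟨heμ, hec, hec'⟩, ?_, ?_⟩
    · intro hmemx
      obtain ⟨hx, -, hx2⟩ := (hmem2 _).mp hmemx
      rcases hup with hh | hh
      · exact hh hx
      · exact hx2 hh
    · intro hmemx
      obtain ⟨hx, hx1, -⟩ := (hmem2 _).mp hmemx
      rcases hright with hh | hh
      · exact hh hx
      · exact hx1 hh
  have hcν1 : (eraseCorner μ c).card = n - 1 := by rw [card_eraseCorner h, hcard]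
  have hcν2 : (eraseCorner (eraseCorner μ c) c').card = n - 2 := by
    rw [card_eraseCorner hc'1, hcν1]; omega
  have hcρ : (eraseCorner (eraseCorner (eraseCorner μ c) c') e).card = n - 3 := by
    rw [card_eraseCorner hecor, hcν2]; omega
  obtain ⟨V, hV⟩ := exists_isSYT (n - 3) _ hcρ
  have hA : IsSYT (n - 2) (eraseCorner (eraseCorner μ c) c') (extT (n-2) e V) := by
    apply isSYT_extT hecor (by omega)
    rwa [show n - 2 - 1 = n - 3 by omega]
  have hB₁ : IsSYT (n - 1) (eraseCorner μ c) (extT (n-1) c' (extT (n-2) e V)) := by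
    apply isSYT_extT hc'1 (by omega)
    rwa [show n - 1 - 1 = n - 2 by omega]
  have hU₁ : IsSYT n μ (extT n c (extT (n-1) c' (extT (n-2) e V))) := by
    have := isSYT_extT h (by omega : 1 ≤ n) (by rwa [show n - 1 = n - 1 by rfl])
    exact this
  set U₁ := extT n c (extT (n-1) c' (extT (n-2) e V)) with hU₁def
  have hA' : IsSYT (n - 2) (eraseCorner (eraseCorner μ c') c) (extT (n-2) e V) := by
    rwa [← eraseCorner_comm h h' hnec]
  have hB₂ : IsSYT (n - 1) (eraseCorner μ c') (extT (n-1) c (extT (n-2) e V)) := by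
    apply isSYT_extT hc1 (by omega)
    rwa [show n - 1 - 1 = n - 2 by omega]
  have hU₂ : IsSYT n μ (extT n c' (extT (n-1) c (extT (n-2) e V))) :=
    isSYT_extT h' (by omega) hB₂
  set U₂ := extT n c' (extT (n-1) c (extT (n-2) e V)) with hU₂def
  have hVlt : ∀ d, V d ≤ n - 3 := val_le hV
  have hU₁c : U₁ c = n := by simp [hU₁def, extT]
  have hU₁c' : U₁ c' = n - 1 := by simp [hU₁def, extT, Ne.symm hnec]
  have hU₁e : U₁ e = n - 2 := by simp [hU₁def, extT, hec, hec']
  have hU₂c' : U₂ c' = n := by simp [hU₂def, extT]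
  have hU₂c : U₂ c = n - 1 := by simp [hU₂def, extT, hnec]
  have hU₂e : U₂ e = n - 2 := by simp [hU₂def, extT, hec, hec']
  have hswap12 : swapVals (n-1) n U₁ = U₂ := by
    funext d
    by_cases hdc : d = c
    · subst hdc
      simp only [swapVals, hU₁c, hU₂c]
      split_ifs <;> omega
    by_cases hdc' : d = c'
    · subst hdc'
      simp only [swapVals, hU₁c', hU₂c']
      split_ifs <;> omega
    by_cases hde : d = e
    · subst hde
      simp only [swapVals, hU₁e, hU₂e]
      split_ifs <;> omega
    · have hU₁d : U₁ d = V d := by simp [hU₁def, extT, hdc, hdc', hde]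
      have hU₂d : U₂ d = V d := by simp [hU₂def, extT, hdc, hdc', hde]
      have hVd := hVlt d
      simp only [swapVals, hU₁d, hU₂d]
      split_ifs <;> omega
  have hswap21 : swapVals (n-1) n U₂ = U₁ := by
    funext d
    by_cases hdc : d = c
    · subst hdc
      simp only [swapVals, hU₂c, hU₁c]
      split_ifs <;> omega
    by_cases hdc' : d = c'
    · subst hdc'
      simp only [swapVals, hU₂c', hU₁c']
      split_ifs <;> omega
    by_cases hde : d = e
    · subst hde
      simp only [swapVals, hU₂e, hU₁e]
      split_ifs <;> omega
    · have hU₁d : U₁ d = V d := by simp [hU₁def, extT, hdc, hdc', hde]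
      have hU₂d : U₂ d = V d := by simp [hU₂def, extT, hdc, hdc', hde]
      have hVd := hVlt d
      simp only [swapVals, hU₁d, hU₂d]
      split_ifs <;> omega
  have hcmem : c ∈ μ.cells := by simpa using h.1
  have hc'mem : c' ∈ μ.cells := by simpa using h'.1
  have hemem : e ∈ μ.cells := by simpa using heμ
  have P1 : Precedes μ U₁ (n-1) (n-2) := ⟨c', hc'mem, e, hemem, hU₁c', hU₁e, Or.inl helt⟩
  have P2 : Precedes μ U₁ (n-2) n := ⟨e, hemem, c, hcmem, hU₁e, hU₁c, hreg⟩
  have P3 : Precedes μ U₂ n (n-2) := ⟨c', hc'mem, e, hemem, hU₂c', hU₂e, Or.inl helt⟩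
  have P4 : Precedes μ U₂ (n-2) (n-1) := ⟨e, hemem, c, hcmem, hU₂e, hU₂c, hreg⟩
  have hsub1 : n - 1 - 1 = n - 2 := by omega
  have hsub2 : n - 1 + 1 = n := by omega
  have hd12 : dT μ (n-1) U₁ = U₂ := by
    simp only [dT, hsub1, hsub2]
    rw [if_pos (Or.inl ⟨P1, P2⟩)]
    exact hswap12
  have hd21 : dT μ (n-1) U₂ = U₁ := by
    simp only [dT, hsub1, hsub2]
    rw [if_pos (Or.inr ⟨P3, P4⟩)]
    exact hswap21
  exact ⟨U₁, U₂, hU₁, hU₂, hU₁c, hU₂c', ⟨μ, hU₁, hU₂, n-1, by omega, le_rfl, hd12⟩,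
    ⟨μ, hU₂, hU₁, n-1, by omega, le_rfl, hd21⟩⟩

lemma connected : ∀ (n : ℕ) (μ : YoungDiagram), μ.card = n → ∀ T T' : ℕ × ℕ → ℕ,
    IsSYT n μ T → IsSYT n μ T' → Relation.ReflTransGen (dtRel n) T T' := by
  intro n
  induction n using Nat.strong_induction_on with
  | _ n ih =>
    intro μ hcard T T' hT hT'
    rcases Nat.eq_zero_or_pos n with h0 | hpos
    · subst h0
      have hTT : T = T' := by
        funext d
        have hd : d ∉ μ := by
          intro hdm
          have := val_bounds hT hdm
          omega
        rw [hT.1 d hd, hT'.1 d hd]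
      rw [hTT]
    · have SP : ∀ (S S' : ℕ × ℕ → ℕ) (cc : ℕ × ℕ), IsSYT n μ S → IsSYT n μ S' → cc ∈ μ →
          S cc = n → S' cc = n → Relation.ReflTransGen (dtRel n) S S' := by
        intro S S' cc hS hS' hccm hSc hS'c
        have hcor := corner_of_max hS hccm hSc
        have hνcard : (eraseCorner μ cc).card = n - 1 := by rw [card_eraseCorner hcor, hcard]
        have hRS := isSYT_resT hS hccm hSc hpos
        have hRS' := isSYT_resT hS' hccm hS'c hpos
        have hch := ih (n-1) (by omega) _ hνcard _ _ hRS hRS'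
        have hlift := lift_chain hcor hpos hch hRS
        rw [extT_resT hSc, extT_resT hS'c] at hlift
        exact hlift.2
      obtain ⟨cT, hcTm, hcTv⟩ := exists_val hT hpos le_rfl
      obtain ⟨cT', hcT'm, hcT'v⟩ := exists_val hT' hpos le_rfl
      by_cases hcc : cT = cT'
      · exact SP T T' cT hT hT' hcTm hcTv (by rw [hcc]; exact hcT'v)
      · have hcorT := corner_of_max hT hcTm hcTv
        have hcorT' := corner_of_max hT' hcT'm hcT'v
        have hrow := corner_row_ne hcorT hcorT' hcc
        rcases hrow.lt_or_gt with hlt | hlt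
        · obtain ⟨U₁, U₂, hU₁, hU₂, hU₁c, hU₂c, hstep, -⟩ := move_corner hcard hcorT hcorT' hlt
          exact (SP T U₁ cT hT hU₁ hcTm hcTv hU₁c).trans
            ((Relation.ReflTransGen.single hstep).trans
              (SP U₂ T' cT' hU₂ hT' hcT'm hU₂c hcT'v))
        · obtain ⟨U₁, U₂, hU₁, hU₂, hU₁c, hU₂c, -, hstep⟩ := move_corner hcard hcorT' hcorT hlt
          exact (SP T U₂ cT hT hU₂ hcTm hcTv hU₂c).trans
            ((Relation.ReflTransGen.single hstep).trans
              (SP U₁ T' cT' hU₁ hT' hcT'm hU₁c hcT'v))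

end DualEquivAux

/-- two standard Young tableaux of partition shapes are connected by
a sequence of elementary dual equivalences `d_i` if and only if they have the same
shape. -/
theorem dual_equivalent_iff_same_shape (n : ℕ) (μ μ' : YoungDiagram)
    (hμ : μ.card = n) (hμ' : μ'.card = n) (T T' : ℕ × ℕ → ℕ)
    (hT : IsSYT n μ T) (hT' : IsSYT n μ' T') :
    Relation.ReflTransGen (dtRel n) T T' ↔ μ = μ' := by
  constructor
  · intro hRT
    have inv : ∀ S, Relation.ReflTransGen (dtRel n) T S → IsSYT n μ S := by
      intro S h
      induction h with
      | refl => exact hT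
      | tail hTS step ihh =>
        obtain ⟨ν, h1, h2, -⟩ := step
        rwa [DualEquivAux.shape_unique ihh h1]
    exact DualEquivAux.shape_unique (inv T' hRT) hT'
  · intro h
    subst h
    exact DualEquivAux.connected n μ hμ T T' hT hT'
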